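/- Let N ≥ 1, let λ : {1,…,N} → ℝ, let S ⊆ {1,…,N} be nonempty with n = |S|, and let z ∈ Δ be a point whose support is exactly S (z_i > 0 for i ∈ S and z_i = 0 otherwise). If z is an equilibrium of the invader-driven replicator vector field (F(z) = 0) and λ_i ≠ 0 for every i ∈ S, then z_i = 1 − Q(z)/λ_i for every i ∈ S, and Q(z) · Σ_{i∈S} λ_i⁻¹ = n − 1. -/
import Mathlib


/-- For the invader-driven replicator vector field
`F(z)_i = z_i (λ_i (1 - z_i) - Q(z))` with `Q(z) = Σ_j λ_j (1 - z_j) z_j`,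
if `z` lies in the simplex with support exactly `S`, is an equilibrium, and `λ_i ≠ 0`
on `S`, then `z_i = 1 - Q(z)/λ_i` on `S` and `Q(z) · Σ_{i∈S} λ_i⁻¹ = n - 1`. -/
theorem stmt_0 (N : ℕ) (hN : 1 ≤ N) (lam : Fin N → ℝ)
    (S : Finset (Fin N)) (hS : S.Nonempty) (n : ℕ) (hn : n = S.card)
    (z : Fin N → ℝ)
    (hsupp_pos : ∀ i ∈ S, 0 < z i) (hsupp_zero : ∀ i ∉ S, z i = 0)
    (hnonneg : ∀ i, 0 ≤ z i) (hsum : ∑ i, z i = 1)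
    (heq : ∀ i, z i * (lam i * (1 - z i) - ∑ j, lam j * (1 - z j) * z j) = 0)
    (hlam : ∀ i ∈ S, lam i ≠ 0) :
    (∀ i ∈ S, z i = 1 - (∑ j, lam j * (1 - z j) * z j) / lam i) ∧
      (∑ j, lam j * (1 - z j) * z j) * (∑ i ∈ S, (lam i)⁻¹) = (n : ℝ) - 1 := by
  set Q := ∑ j, lam j * (1 - z j) * z j with hQ
  have key : ∀ i ∈ S, z i = 1 - Q / lam i := by
    intro i hi
    have hz := (hsupp_pos i hi).ne'
    have h := heq i
    have h2 : lam i * (1 - z i) - Q = 0 := by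
      rcases mul_eq_zero.mp h with h | h
      · exact absurd h hz
      · exact h
    have hl := hlam i hi
    field_simp at h2 ⊢
    linarith [h2]
  refine ⟨key, ?_⟩
  have hsum' : ∑ i ∈ S, z i = 1 := by
    rw [← hsum]
    exact (Finset.sum_subset (Finset.subset_univ S)
      (fun i _ hi => hsupp_zero i hi))
  have : ∑ i ∈ S, z i = ∑ i ∈ S, (1 - Q * (lam i)⁻¹) := by
    apply Finset.sum_congr rfl
    intro i hi
    rw [key i hi, div_eq_mul_inv]
  rw [hsum'] at this
  rw [Finset.sum_sub_distrib, Finset.sum_const, ← Finset.mul_sum] at this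
  simp only [nsmul_eq_mul, mul_one] at this
  rw [hn]
  linarith
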